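/- arXiv:2005.00838 — 2 statements merged into one kernel-verified Lean document; each statement's English description precedes it below -/
import Mathlib

section
/- (Implicit Duality Theorem) Let F be a field, let S, P, Q be pairwise disjoint finite sets, and let V_SP ⊆ F_{S∪P} and V_PQ ⊆ F_{P∪Q} be subspaces. Then (V_SP ↔ V_PQ)^⊥ = V_SP^⊥ ⇌ V_PQ^⊥, where the orthogonal complement on the left is taken in F_{S∪Q}. In particular, for Q = ∅ and a subspace V_P ⊆ F_P one has (V_SP ↔ V_P)^⊥ = V_SP^⊥ ↔ V_P^⊥. -/
noncomputable section

open scoped BigOperators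

/-- Dot product of two vectors indexed by a finite type. -/
def dotProd {F X : Type*} [Field F] [Fintype X] (f g : X → F) : F :=
  ∑ x, f x * g x

/-- Orthogonal complement of a collection of vectors on a single finite index set. -/
def perp1 {F X : Type*} [Field F] [Fintype X] (K : Set (X → F)) : Set (X → F) :=
  {g | ∀ f ∈ K, dotProd f g = 0}

/-- Orthogonal complement of a collection of vectors on a union of two disjoint
finite index sets (encoded as pairs). -/
def perp2 {F A B : Type*} [Field F] [Fintype A] [Fintype B]
    (K : Set ((A → F) × (B → F))) : Set ((A → F) × (B → F)) :=
  {y | ∀ x ∈ K, dotProd x.1 y.1 + dotProd x.2 y.2 = 0}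

/-- Matched composition over the shared (middle) index set. -/
def matchedComp {A C B : Type*} (K₁ : Set (A × C)) (K₂ : Set (C × B)) : Set (A × B) :=
  {x | ∃ c, (x.1, c) ∈ K₁ ∧ (c, x.2) ∈ K₂}

/-- Skewed composition over the shared (middle) index set. -/
def skewedComp {A C B : Type*} [Neg C] (K₁ : Set (A × C)) (K₂ : Set (C × B)) : Set (A × B) :=
  {x | ∃ c, (x.1, c) ∈ K₁ ∧ (-c, x.2) ∈ K₂}

/-- Matched composition with a collection on the shared index set only
(the case `Q = ∅`). -/
def matchedComp1 {A C : Type*} (K₁ : Set (A × C)) (K₂ : Set C) : Set A :=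
  {a | ∃ c, (a, c) ∈ K₁ ∧ c ∈ K₂}

section helpers

variable {F : Type*} [Field F]

lemma dotProd_comm {X : Type*} [Fintype X] (f g : X → F) : dotProd f g = dotProd g f := by
  simp [dotProd, mul_comm]

lemma dotProd_add_left {X : Type*} [Fintype X] (f f' g : X → F) :
    dotProd (f + f') g = dotProd f g + dotProd f' g := by
  simp [dotProd, add_mul, Finset.sum_add_distrib]

lemma dotProd_add_right {X : Type*} [Fintype X] (f g g' : X → F) :
    dotProd f (g + g') = dotProd f g + dotProd f g' := by
  simp [dotProd, mul_add, Finset.sum_add_distrib]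

lemma dotProd_smul_left {X : Type*} [Fintype X] (c : F) (f g : X → F) :
    dotProd (c • f) g = c * dotProd f g := by
  simp [dotProd, Finset.mul_sum, mul_assoc]

lemma dotProd_smul_right {X : Type*} [Fintype X] (c : F) (f g : X → F) :
    dotProd f (c • g) = c * dotProd f g := by
  simp [dotProd, Finset.mul_sum]; ring_nf; simp [mul_comm, mul_left_comm]

lemma dotProd_zero_left {X : Type*} [Fintype X] (g : X → F) : dotProd 0 g = 0 := by
  simp [dotProd]

lemma dotProd_zero_right {X : Type*} [Fintype X] (f : X → F) : dotProd f 0 = 0 := by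
  simp [dotProd]

lemma dotProd_single {X : Type*} [Fintype X] [DecidableEq X] (f : X → F) (x : X) :
    dotProd f (Pi.single x 1) = f x := by
  simp [dotProd, Pi.single_apply, mul_ite, Finset.sum_ite_eq']

lemma dotProd_neg_left {X : Type*} [Fintype X] (f g : X → F) :
    dotProd (-f) g = -dotProd f g := by
  simp [dotProd, Finset.sum_neg_distrib]

/-- The key abstract fact: perp of an intersection is the sum of the perps. -/
lemma key {M : Type*} [AddCommGroup M] [Module F M]
    (e : M ≃ₗ[F] Module.Dual F M) (A B : Submodule F M) (v : M) :
    (∀ x ∈ A ⊓ B, e v x = 0) ↔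
      ∃ y z, (∀ x ∈ A, e y x = 0) ∧ (∀ x ∈ B, e z x = 0) ∧ y + z = v := by
  have h1 : ∀ (U : Submodule F M) (w : M), (∀ x ∈ U, e w x = 0) ↔
      w ∈ (U.dualAnnihilator).comap e.toLinearMap := by
    intro U w
    simp [Submodule.mem_dualAnnihilator]
  rw [h1, Subspace.dualAnnihilator_inf_eq, Submodule.comap_equiv_eq_map_symm,
    Submodule.map_sup, Submodule.mem_sup]
  constructor
  · rintro ⟨y, hy, z, hz, rfl⟩
    refine ⟨y, z, ?_, ?_, rfl⟩
    · rw [h1, Submodule.comap_equiv_eq_map_symm]; exact hy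
    · rw [h1, Submodule.comap_equiv_eq_map_symm]; exact hz
  · rintro ⟨y, z, hy, hz, rfl⟩
    rw [h1, Submodule.comap_equiv_eq_map_symm] at hy hz
    exact ⟨y, hy, z, hz, rfl⟩

/-- Upgrade an injective map to the dual to an equivalence. -/
def toDualEquivOf {M : Type*} [AddCommGroup M] [Module F M] [FiniteDimensional F M]
    (L : M →ₗ[F] Module.Dual F M) (h : Function.Injective L) : M ≃ₗ[F] Module.Dual F M :=
  LinearEquiv.ofBijective L
    ⟨h, (LinearMap.injective_iff_surjective_of_finrank_eq_finrank
      (Subspace.dual_finrank_eq).symm).mp h⟩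

@[simp] lemma toDualEquivOf_apply {M : Type*} [AddCommGroup M] [Module F M]
    [FiniteDimensional F M] (L : M →ₗ[F] Module.Dual F M) (h : Function.Injective L) (x : M) :
    toDualEquivOf L h x = L x := rfl

end helpers

section main

variable {F S P Q : Type*} [Field F] [Fintype S] [Fintype P] [Fintype Q]

/-- Triple pairing on `((S→F) × (Q→F)) × (P→F)`. -/
def L3 : (((S → F) × (Q → F)) × (P → F)) →ₗ[F] Module.Dual F (((S → F) × (Q → F)) × (P → F)) :=
  LinearMap.mk₂ F
    (fun x y => dotProd x.1.1 y.1.1 + dotProd x.1.2 y.1.2 + dotProd x.2 y.2)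
    (by intro m₁ m₂ n; simp [dotProd_add_left]; ring)
    (by intro c m n; simp [dotProd_smul_left]; ring)
    (by intro m n₁ n₂; simp [dotProd_add_right]; ring)
    (by intro c m n; simp [dotProd_smul_right]; ring)

lemma L3_apply (x y : ((S → F) × (Q → F)) × (P → F)) :
    L3 x y = dotProd x.1.1 y.1.1 + dotProd x.1.2 y.1.2 + dotProd x.2 y.2 := rfl

lemma L3_injective : Function.Injective (L3 (F := F) (S := S) (P := P) (Q := Q)) := by
  classical
  rw [injective_iff_map_eq_zero]
  intro v hv
  have h : ∀ y, L3 v y = 0 := fun y => by rw [hv]; rfl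
  have h1 : v.1.1 = 0 := by
    funext s
    have := h ((Pi.single s 1, 0), 0)
    simpa [L3_apply, dotProd_zero_right, dotProd_single] using this
  have h2 : v.1.2 = 0 := by
    funext q
    have := h ((0, Pi.single q 1), 0)
    simpa [L3_apply, dotProd_zero_right, dotProd_single] using this
  have h3 : v.2 = 0 := by
    funext p
    have := h ((0, 0), Pi.single p 1)
    simpa [L3_apply, dotProd_zero_right, dotProd_single] using this
  exact Prod.ext (Prod.ext h1 h2) h3

/-- Pairing on `(S→F) × (P→F)`. -/
def L2 : ((S → F) × (P → F)) →ₗ[F] Module.Dual F ((S → F) × (P → F)) :=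
  LinearMap.mk₂ F
    (fun x y => dotProd x.1 y.1 + dotProd x.2 y.2)
    (by intro m₁ m₂ n; simp [dotProd_add_left]; ring)
    (by intro c m n; simp [dotProd_smul_left]; ring)
    (by intro m n₁ n₂; simp [dotProd_add_right]; ring)
    (by intro c m n; simp [dotProd_smul_right]; ring)

lemma L2_apply (x y : (S → F) × (P → F)) :
    L2 x y = dotProd x.1 y.1 + dotProd x.2 y.2 := rfl

lemma L2_injective : Function.Injective (L2 (F := F) (S := S) (P := P)) := by
  classical
  rw [injective_iff_map_eq_zero]
  intro v hv
  have h : ∀ y, L2 v y = 0 := fun y => by rw [hv]; rfl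
  have h1 : v.1 = 0 := by
    funext s
    have := h (Pi.single s 1, 0)
    simpa [L2_apply, dotProd_zero_right, dotProd_single] using this
  have h2 : v.2 = 0 := by
    funext p
    have := h (0, Pi.single p 1)
    simpa [L2_apply, dotProd_zero_right, dotProd_single] using this
  exact Prod.ext h1 h2

end main

/-- Implicit Duality Theorem: `(V_SP ↔ V_PQ)^⊥ = V_SP^⊥ ⇌ V_PQ^⊥`; in
particular (for `Q = ∅`) `(V_SP ↔ V_P)^⊥ = V_SP^⊥ ↔ V_P^⊥`. -/
theorem stmt7 (F S P Q : Type*) [Field F] [Fintype S] [Fintype P] [Fintype Q]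
    (VSP : Submodule F ((S → F) × (P → F))) (VPQ : Submodule F ((P → F) × (Q → F)))
    (VP : Submodule F (P → F)) :
    perp2 (matchedComp (VSP : Set ((S → F) × (P → F))) (VPQ : Set ((P → F) × (Q → F))))
        = skewedComp (perp2 (VSP : Set ((S → F) × (P → F))))
            (perp2 (VPQ : Set ((P → F) × (Q → F))))
    ∧ perp1 (matchedComp1 (VSP : Set ((S → F) × (P → F))) (VP : Set (P → F)))
        = matchedComp1 (perp2 (VSP : Set ((S → F) × (P → F)))) (perp1 (VP : Set (P → F))) := by
  classical
  constructor
  · -- Part 1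
    -- work in M := ((S→F) × (Q→F)) × (P→F)
    set e := toDualEquivOf (L3 (F := F) (S := S) (P := P) (Q := Q)) L3_injective with he
    -- subspaces A, B in M
    let φ₁ : (((S → F) × (Q → F)) × (P → F)) →ₗ[F] ((S → F) × (P → F)) :=
      LinearMap.prod (LinearMap.fst F (S → F) (Q → F) ∘ₗ LinearMap.fst F _ _)
        (LinearMap.snd F _ _)
    let φ₂ : (((S → F) × (Q → F)) × (P → F)) →ₗ[F] ((P → F) × (Q → F)) :=
      LinearMap.prod (LinearMap.snd F _ _)
        (LinearMap.snd F (S → F) (Q → F) ∘ₗ LinearMap.fst F _ _)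
    let A := VSP.comap φ₁
    let B := VPQ.comap φ₂
    ext ⟨f, h⟩
    have hmem : ((f, h) ∈ perp2 (matchedComp (VSP : Set ((S → F) × (P → F)))
          (VPQ : Set ((P → F) × (Q → F))))) ↔
        ∀ x ∈ A ⊓ B, e ((f, h), (0 : P → F)) x = 0 := by
      constructor
      · rintro hp ⟨⟨a, b⟩, g⟩ ⟨hA, hB⟩
        have h2 := hp (a, b) ⟨g, hA, hB⟩
        simp only [he, toDualEquivOf_apply, L3_apply, dotProd_zero_left, add_zero]
        rw [dotProd_comm f a, dotProd_comm h b]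
        exact h2
      · rintro hp ⟨a, b⟩ ⟨g, hA, hB⟩
        have h2 := hp ((a, b), g) ⟨hA, hB⟩
        simp only [he, toDualEquivOf_apply, L3_apply, dotProd_zero_left, add_zero] at h2
        rw [dotProd_comm a f, dotProd_comm b h]
        exact h2
    have hAchar : ∀ y : ((S → F) × (Q → F)) × (P → F),
        (∀ x ∈ A, e y x = 0) ↔
          ((y.1.1, y.2) ∈ perp2 (VSP : Set ((S → F) × (P → F))) ∧ y.1.2 = 0) := by
      rintro ⟨⟨y11, y12⟩, y2⟩
      constructor
      · intro hy
        constructor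
        · rintro ⟨a, g⟩ hag
          have h2 := hy ((a, 0), g) (by simpa [A, φ₁] using hag)
          simp only [he, toDualEquivOf_apply, L3_apply, dotProd_zero_right, add_zero] at h2
          simp only [dotProd_comm a y11, dotProd_comm g y2]
          simpa using h2
        · funext q
          have h2 := hy ((0, Pi.single q 1), 0) (by simp [A, φ₁, Submodule.zero_mem]; exact VSP.zero_mem)
          simpa [he, toDualEquivOf_apply, L3_apply, dotProd_zero_right, dotProd_single]
            using h2
      · rintro ⟨hperp, h0⟩ ⟨⟨a, b⟩, g⟩ hx
        have h2 := hperp (a, g) (by simpa [A, φ₁] using hx)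
        simp only [dotProd_comm a y11, dotProd_comm g y2] at h2
        show dotProd y11 a + dotProd y12 b + dotProd y2 g = 0
        rw [show y12 = (0 : Q → F) from h0, dotProd_zero_left, add_zero]
        linear_combination h2
    have hBchar : ∀ z : ((S → F) × (Q → F)) × (P → F),
        (∀ x ∈ B, e z x = 0) ↔
          ((z.2, z.1.2) ∈ perp2 (VPQ : Set ((P → F) × (Q → F))) ∧ z.1.1 = 0) := by
      rintro ⟨⟨z11, z12⟩, z2⟩
      constructor
      · intro hz
        constructor
        · rintro ⟨g, b⟩ hgb
          have h2 := hz ((0, b), g) (by simpa [B, φ₂] using hgb)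
          simp only [he, toDualEquivOf_apply, L3_apply, dotProd_zero_right, zero_add] at h2
          simp only [dotProd_comm g z2, dotProd_comm b z12]
          linear_combination h2
        · funext sv
          have h2 := hz ((Pi.single sv 1, 0), 0) (by simp [B, φ₂, Submodule.zero_mem]; exact VPQ.zero_mem)
          simpa [he, toDualEquivOf_apply, L3_apply, dotProd_zero_right, dotProd_single]
            using h2
      · rintro ⟨hperp, h0⟩ ⟨⟨a, b⟩, g⟩ hx
        have h2 := hperp (g, b) (by simpa [B, φ₂] using hx)
        simp only [dotProd_comm g z2, dotProd_comm b z12] at h2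
        show dotProd z11 a + dotProd z12 b + dotProd z2 g = 0
        rw [show z11 = (0 : S → F) from h0, dotProd_zero_left, zero_add]
        linear_combination h2
    rw [hmem, key e A B]
    constructor
    · rintro ⟨⟨⟨y11, y12⟩, y2⟩, ⟨⟨z11, z12⟩, z2⟩, hy, hz, hadd⟩
      obtain ⟨hyP, hy0⟩ := (hAchar _).mp hy
      obtain ⟨hzP, hz0⟩ := (hBchar _).mp hz
      dsimp only at hyP hy0 hzP hz0
      simp only [Prod.mk_add_mk, Prod.mk.injEq] at hadd
      obtain ⟨⟨e1, e2⟩, e3⟩ := hadd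
      refine ⟨y2, ?_, ?_⟩
      · have : y11 = f := by rw [hz0, add_zero] at e1; exact e1
        simpa [this] using hyP
      · have h1 : z12 = h := by rw [hy0, zero_add] at e2; exact e2
        have h2 : z2 = -y2 := by linear_combination e3
        simpa [h1, h2] using hzP
    · rintro ⟨c, hc1, hc2⟩
      refine ⟨((f, 0), c), ((0, h), -c), ?_, ?_, ?_⟩
      · exact (hAchar _).mpr ⟨hc1, rfl⟩
      · exact (hBchar _).mpr ⟨hc2, rfl⟩
      · simp [Prod.ext_iff]
  · -- Part 2
    set e := toDualEquivOf (L2 (F := F) (S := S) (P := P)) L2_injective with he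
    let B := VP.comap (LinearMap.snd F (S → F) (P → F))
    ext f
    have hmem : (f ∈ perp1 (matchedComp1 (VSP : Set ((S → F) × (P → F)))
          (VP : Set (P → F)))) ↔
        ∀ x ∈ VSP ⊓ B, e (f, (0 : P → F)) x = 0 := by
      constructor
      · rintro hp ⟨a, g⟩ ⟨hA, hB⟩
        have h2 := hp a ⟨g, hA, hB⟩
        simp only [he, toDualEquivOf_apply, L2_apply, dotProd_zero_left, add_zero]
        rw [dotProd_comm f a]
        exact h2
      · rintro hp a ⟨g, hA, hB⟩
        have h2 := hp (a, g) ⟨hA, hB⟩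
        simp only [he, toDualEquivOf_apply, L2_apply, dotProd_zero_left, add_zero] at h2
        rw [dotProd_comm a f]
        exact h2
    have hAchar : ∀ y : (S → F) × (P → F),
        (∀ x ∈ VSP, e y x = 0) ↔ y ∈ perp2 (VSP : Set ((S → F) × (P → F))) := by
      rintro ⟨y1, y2⟩
      constructor
      · intro hy ⟨a, g⟩ hag
        have h2 := hy (a, g) hag
        simp only [he, toDualEquivOf_apply, L2_apply] at h2
        simp only [dotProd_comm a y1, dotProd_comm g y2]
        exact h2
      · intro hy ⟨a, g⟩ hag
        have h2 := hy (a, g) hag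
        simp only [dotProd_comm a y1, dotProd_comm g y2] at h2
        simpa [he, toDualEquivOf_apply, L2_apply] using h2
    have hBchar : ∀ z : (S → F) × (P → F),
        (∀ x ∈ B, e z x = 0) ↔ (z.2 ∈ perp1 (VP : Set (P → F)) ∧ z.1 = 0) := by
      rintro ⟨z1, z2⟩
      constructor
      · intro hz
        constructor
        · intro g hg
          have h2 := hz (0, g) (by simpa [B] using hg)
          simp only [he, toDualEquivOf_apply, L2_apply, dotProd_zero_right, zero_add] at h2
          rw [dotProd_comm g z2]
          linear_combination h2
        · funext sv
          have h2 := hz (Pi.single sv 1, 0) (by simp [B, Submodule.zero_mem])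
          simpa [he, toDualEquivOf_apply, L2_apply, dotProd_zero_right, dotProd_single]
            using h2
      · rintro ⟨hperp, h0⟩ ⟨a, g⟩ hx
        have h2 := hperp g (by simpa [B] using hx)
        rw [dotProd_comm g z2] at h2
        show dotProd z1 a + dotProd z2 g = 0
        rw [show z1 = (0 : S → F) from h0, dotProd_zero_left, zero_add]
        exact h2
    rw [hmem, key e VSP B]
    constructor
    · rintro ⟨⟨y1, y2⟩, ⟨z1, z2⟩, hy, hz, hadd⟩
      have hyP := (hAchar _).mp hy
      obtain ⟨hzP, hz0⟩ := (hBchar _).mp hz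
      dsimp only at hyP hzP hz0
      simp only [Prod.mk_add_mk, Prod.mk.injEq] at hadd
      obtain ⟨e1, e2⟩ := hadd
      have hy1 : y1 = f := by rw [hz0, add_zero] at e1; exact e1
      have hz2 : z2 = -y2 := by linear_combination e2
      refine ⟨y2, by simpa [hy1] using hyP, ?_⟩
      intro g hg
      have h2 := hzP g hg
      rw [hz2] at h2
      simpa [dotProd] using h2
    · rintro ⟨c, hc1, hc2⟩
      refine ⟨(f, c), (0, -c), (hAchar _).mpr hc1, ?_, by simp [Prod.ext_iff]⟩
      refine (hBchar _).mpr ⟨?_, rfl⟩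
      intro g hg
      have h2 := hc2 g hg
      simpa [dotProd] using h2
end
end

section
/- Let F be a field and let S, P be disjoint finite sets with pairwise disjoint copies S′, S″, P′, P″. Let V₁, V̂₁ ⊆ F_{S′∪P′∪S″∪P″} be Dirac duals of each other with respect to the copies S′∪P′ and S″∪P″, and let V₂, V̂₂ ⊆ F_{S′∪S″} be Dirac duals of each other with respect to the copies S′ and S″. Then the matched compositions V₁ ↔ V₂ and V̂₁ ↔ V̂₂ (over the shared index set S′∪S″, subspaces of F_{P′∪P″}) are Dirac duals of each other with respect to the copies P′ and P″. In particular, if V₁ and V₂ are Dirac (self-Dirac-dual), then so is V₁ ↔ V₂. -/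
noncomputable section

open scoped BigOperators

/-- Dot product on `F_{S∪P}` (encoded as pairs). -/
def dotM {F S P : Type*} [Field F] [Fintype S] [Fintype P]
    (x y : (S → F) × (P → F)) : F :=
  dotProd x.1 y.1 + dotProd x.2 y.2

/-- Orthogonal complement of a collection on `X′∪X″` (two copies of `X`). -/
def perpFun2 {F X : Type*} [Field F] [Fintype X]
    (K : Set ((X → F) × (X → F))) : Set ((X → F) × (X → F)) :=
  {y | ∀ x ∈ K, dotProd x.1 y.1 + dotProd x.2 y.2 = 0}

/-- Dirac dual of a collection on `X′∪X″`: `{(a,b) : (b,a) ∈ V^⊥}`. -/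
def diracFun {F X : Type*} [Field F] [Fintype X]
    (V : Set ((X → F) × (X → F))) : Set ((X → F) × (X → F)) :=
  {z | (z.2, z.1) ∈ perpFun2 V}

/-- Orthogonal complement of a collection on `(S′∪P′)∪(S″∪P″)`. -/
def perpM2 {F S P : Type*} [Field F] [Fintype S] [Fintype P]
    (K : Set (((S → F) × (P → F)) × ((S → F) × (P → F)))) :
    Set (((S → F) × (P → F)) × ((S → F) × (P → F))) :=
  {y | ∀ x ∈ K, dotM x.1 y.1 + dotM x.2 y.2 = 0}

/-- Dirac dual of a collection on `(S′∪P′)∪(S″∪P″)` w.r.t. the copies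
`S′∪P′` and `S″∪P″`. -/
def diracM {F S P : Type*} [Field F] [Fintype S] [Fintype P]
    (V : Set (((S → F) × (P → F)) × ((S → F) × (P → F)))) :
    Set (((S → F) × (P → F)) × ((S → F) × (P → F))) :=
  {z | (z.2, z.1) ∈ perpM2 V}

/-- Matched composition of `V₁ ⊆ F_{S′∪P′∪S″∪P″}` with `V₂ ⊆ F_{S′∪S″}`
over the shared index set `S′∪S″`; a subset of `F_{P′∪P″}`. -/
def portComp {F S P : Type*} [Field F]
    (V₁ : Set (((S → F) × (P → F)) × ((S → F) × (P → F))))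
    (V₂ : Set ((S → F) × (S → F))) : Set ((P → F) × (P → F)) :=
  {z | ∃ f₁ f₂ : S → F, ((f₁, z.1), (f₂, z.2)) ∈ V₁ ∧ (f₁, f₂) ∈ V₂}

namespace StmtAux

variable {F : Type*} [Field F]

section Abstract
variable {M : Type*} [AddCommGroup M] [Module F M]

open LinearMap

lemma orth_sup (B : LinearMap.BilinForm F M) (U W : Submodule F M) :
    B.orthogonal (U ⊔ W) = B.orthogonal U ⊓ B.orthogonal W := by
  ext y
  simp only [LinearMap.BilinForm.mem_orthogonal_iff, Submodule.mem_inf]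
  constructor
  · exact fun h => ⟨fun n hn => h n (Submodule.mem_sup_left hn),
      fun n hn => h n (Submodule.mem_sup_right hn)⟩
  · rintro ⟨h1, h2⟩ n hn
    obtain ⟨u, hu, w, hw, rfl⟩ := Submodule.mem_sup.1 hn
    have e1 := h1 u hu
    have e2 := h2 w hw
    simp [LinearMap.BilinForm.add_left, e1, e2]

lemma orth_inf [FiniteDimensional F M] {B : LinearMap.BilinForm F M}
    (hB : B.Nondegenerate) (hB₀ : B.IsRefl) (U W : Submodule F M) :
    B.orthogonal (U ⊓ W) = B.orthogonal U ⊔ B.orthogonal W := by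
  conv_lhs => rw [← LinearMap.BilinForm.orthogonal_orthogonal hB hB₀ U,
    ← LinearMap.BilinForm.orthogonal_orthogonal hB hB₀ W, ← orth_sup]
  rw [LinearMap.BilinForm.orthogonal_orthogonal hB hB₀]

/-- Pair form: `B((a,b),(c,d)) = d(a,d) + d(b,c)`. -/
def pairForm (d : M →ₗ[F] M →ₗ[F] F) : LinearMap.BilinForm F (M × M) :=
  LinearMap.mk₂ F (fun x y => d x.1 y.2 + d x.2 y.1)
    (fun m m' n => by simp; ring)
    (fun c m n => by simp; ring)
    (fun m n n' => by simp; ring)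
    (fun c m n => by simp; ring)

@[simp] lemma pairForm_apply (d : M →ₗ[F] M →ₗ[F] F) (x y : M × M) :
    pairForm d x y = d x.1 y.2 + d x.2 y.1 := rfl

lemma pairForm_comm (d : M →ₗ[F] M →ₗ[F] F) (hd : ∀ a b, d a b = d b a) (x y : M × M) :
    pairForm d x y = pairForm d y x := by
  simp only [pairForm_apply, hd x.1 y.2, hd x.2 y.1]; ring

lemma pairForm_isRefl (d : M →ₗ[F] M →ₗ[F] F) (hd : ∀ a b, d a b = d b a) :
    (pairForm d).IsRefl := by
  intro x y h; rwa [← pairForm_comm d hd]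

lemma pairForm_nondeg (d : M →ₗ[F] M →ₗ[F] F)
    (hd : ∀ m, (∀ n, d m n = 0) → m = 0) (hs : ∀ a b, d a b = d b a) :
    (pairForm d).Nondegenerate := by
  have key : ∀ x : M × M, (∀ y, pairForm d x y = 0) → x = 0 := by
    intro x hx
    have h1 : x.1 = 0 := hd _ fun n => by simpa using hx (0, n)
    have h2 : x.2 = 0 := hd _ fun n => by simpa using hx (n, 0)
    exact Prod.ext h1 h2
  exact ⟨key, fun x hx => key x fun y => by rw [pairForm_comm d hs]; exact hx y⟩

end Abstract

section Dot

variable {X : Type*} [Fintype X]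

lemma dotProd_comm (f g : X → F) : dotProd f g = dotProd g f := by
  simp [dotProd, mul_comm]

/-- dot product as a bilinear map. -/
def dotL : (X → F) →ₗ[F] (X → F) →ₗ[F] F :=
  LinearMap.mk₂ F dotProd
    (fun m m' n => by simp [dotProd, add_mul, Finset.sum_add_distrib])
    (fun c m n => by simp only [dotProd, Pi.smul_apply, smul_eq_mul, Finset.mul_sum]; exact Finset.sum_congr rfl fun _ _ => by ring)
    (fun m n n' => by simp [dotProd, mul_add, Finset.sum_add_distrib])
    (fun c m n => by simp only [dotProd, Pi.smul_apply, smul_eq_mul, Finset.mul_sum]; exact Finset.sum_congr rfl fun _ _ => by ring)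

@[simp] lemma dotL_apply (f g : X → F) : dotL f g = dotProd f g := rfl

lemma dotL_comm (f g : X → F) : (dotL (F := F)) f g = dotL g f := dotProd_comm f g

lemma dotL_nondeg (f : X → F) (h : ∀ g, dotL f g = 0) : f = 0 := by
  classical
  funext x₀
  have := h (fun x => if x = x₀ then 1 else 0)
  simp only [dotL_apply, dotProd, mul_ite, mul_one, mul_zero] at this
  simpa [Finset.sum_ite_eq'] using this

end Dot

section Concrete

variable {S P : Type*} [Fintype S] [Fintype P]

/-- `dotM` as a bilinear map. -/
def dotML : ((S → F) × (P → F)) →ₗ[F] ((S → F) × (P → F)) →ₗ[F] F :=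
  LinearMap.mk₂ F (fun x y => dotL x.1 y.1 + dotL x.2 y.2)
    (fun m m' n => by
      simp only [Prod.fst_add, Prod.snd_add, map_add, LinearMap.add_apply]; ring)
    (fun c m n => by
      simp only [Prod.smul_fst, Prod.smul_snd, map_smul, LinearMap.smul_apply,
        smul_eq_mul]; ring)
    (fun m n n' => by
      simp only [Prod.fst_add, Prod.snd_add, map_add]; ring)
    (fun c m n => by
      simp only [Prod.smul_fst, Prod.smul_snd, map_smul, smul_eq_mul]; ring)

@[simp] lemma dotML_apply (x y : (S → F) × (P → F)) :
    (dotML (F := F) (S := S) (P := P)) x y = dotProd x.1 y.1 + dotProd x.2 y.2 := rfl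

lemma dotML_comm (x y : (S → F) × (P → F)) :
    (dotML (F := F)) x y = dotML y x := by
  simp [dotML_apply, dotProd_comm x.1 y.1, dotProd_comm x.2 y.2]

lemma dotML_nondeg (x : (S → F) × (P → F))
    (h : ∀ y, (dotML (F := F)) x y = 0) : x = 0 := by
  have h1 : x.1 = 0 := dotL_nondeg _ fun g => by simpa [dotProd] using h (g, 0)
  have h2 : x.2 = 0 := dotL_nondeg _ fun g => by simpa [dotProd] using h (0, g)
  exact Prod.ext h1 h2

abbrev MM (F S P : Type*) [Field F] := ((S → F) × (P → F)) × ((S → F) × (P → F))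
abbrev TT (F S : Type*) [Field F] := (S → F) × (S → F)
abbrev QQ (F P : Type*) [Field F] := (P → F) × (P → F)

/-- The Dirac bilinear forms. -/
def βM : LinearMap.BilinForm F (MM F S P) := pairForm dotML
def βT : LinearMap.BilinForm F (TT F S) := pairForm dotL
def βQ : LinearMap.BilinForm F (QQ F P) := pairForm dotL

lemma βM_refl : (βM (F := F) (S := S) (P := P)).IsRefl :=
  pairForm_isRefl _ dotML_comm
lemma βT_refl : (βT (F := F) (S := S)).IsRefl := pairForm_isRefl _ dotL_comm
lemma βQ_refl : (βQ (F := F) (P := P)).IsRefl := pairForm_isRefl _ dotL_comm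

lemma βM_nondeg : (βM (F := F) (S := S) (P := P)).Nondegenerate :=
  pairForm_nondeg _ dotML_nondeg dotML_comm
lemma βT_nondeg : (βT (F := F) (S := S)).Nondegenerate :=
  pairForm_nondeg _ dotL_nondeg dotL_comm
lemma βQ_nondeg : (βQ (F := F) (P := P)).Nondegenerate :=
  pairForm_nondeg _ dotL_nondeg dotL_comm

/-- Projection onto the `S`-coordinates. -/
def πT : MM F S P →ₗ[F] TT F S :=
  (LinearMap.fst F (S → F) (P → F)).prodMap (LinearMap.fst F (S → F) (P → F))

/-- Projection onto the `P`-coordinates. -/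
def πQ : MM F S P →ₗ[F] QQ F P :=
  (LinearMap.snd F (S → F) (P → F)).prodMap (LinearMap.snd F (S → F) (P → F))

/-- Embedding of the `P`-coordinates. -/
def ιQ : QQ F P →ₗ[F] MM F S P :=
  (LinearMap.inr F (S → F) (P → F)).prodMap (LinearMap.inr F (S → F) (P → F))

/-- Embedding of the `S`-coordinates. -/
def ιT : TT F S →ₗ[F] MM F S P :=
  (LinearMap.inl F (S → F) (P → F)).prodMap (LinearMap.inl F (S → F) (P → F))

@[simp] lemma πT_apply (x : MM F S P) : πT x = (x.1.1, x.2.1) := rfl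
@[simp] lemma πQ_apply (x : MM F S P) : πQ x = (x.1.2, x.2.2) := rfl
@[simp] lemma ιQ_apply (z : QQ F P) : (ιQ (S := S) z : MM F S P) = ((0, z.1), (0, z.2)) := rfl
@[simp] lemma ιT_apply (t : TT F S) : (ιT (P := P) t : MM F S P) = ((t.1, 0), (t.2, 0)) := rfl

lemma βM_split (x y : MM F S P) :
    βM x y = βT (πT x) (πT y) + βQ (πQ x) (πQ y) := by
  simp [βM, βT, βQ, dotML]; ring

lemma lemmaA (Y : Submodule F (MM F S P)) :
    βQ.orthogonal (Submodule.map πQ Y) = Submodule.comap ιQ (βM.orthogonal Y) := by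
  ext z
  simp only [LinearMap.BilinForm.mem_orthogonal_iff, Submodule.mem_comap,
    Submodule.mem_map, LinearMap.BilinForm.IsOrtho]
  constructor
  · intro h x hx
    have := h (πQ x) ⟨x, hx, rfl⟩
    rw [βM_split]
    simpa [dotProd, Prod.mk_zero_zero] using this
  · rintro h n ⟨x, hx, rfl⟩
    have := h x hx
    rw [βM_split] at this
    simpa [dotProd, Prod.mk_zero_zero] using this

lemma lemmaB (V₂ : Submodule F (TT F S)) :
    (βM (F := F) (S := S) (P := P)).orthogonal (Submodule.comap πT V₂)
      = Submodule.comap πT (βT.orthogonal V₂) ⊓ LinearMap.ker πQ := by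
  ext x
  simp only [LinearMap.BilinForm.mem_orthogonal_iff, Submodule.mem_comap,
    Submodule.mem_inf, LinearMap.mem_ker, LinearMap.BilinForm.IsOrtho]
  constructor
  · intro h
    have hq : πQ x = 0 := by
      have hz : ∀ w : QQ F P, βQ (πQ x) w = 0 := by
        intro w
        have h1 := h (ιQ w) (by simp [Submodule.zero_mem, Prod.mk_zero_zero])
        rw [βM_split] at h1
        have h2 : βQ w (πQ x) = 0 := by simpa [dotProd, Prod.mk_zero_zero] using h1
        exact βQ_refl _ _ h2
      exact βQ_nondeg.1 _ hz
    refine ⟨fun t ht => ?_, hq⟩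
    have h1 := h (ιT t) (by simpa using ht)
    rw [βM_split] at h1
    simpa [dotProd, Prod.mk_zero_zero] using h1
  · rintro ⟨h1, h2⟩ n hn
    rw [βM_split, h2, h1 _ hn]
    simp [βQ, dotProd]

lemma lemmaC (W₁ : Submodule F (MM F S P)) (W₂ : Submodule F (TT F S)) :
    Submodule.comap ιQ (W₁ ⊔ (Submodule.comap πT W₂ ⊓ LinearMap.ker πQ))
      = Submodule.map πQ (W₁ ⊓ Submodule.comap πT W₂) := by
  ext z
  simp only [Submodule.mem_comap, Submodule.mem_map, Submodule.mem_inf, LinearMap.mem_ker]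
  constructor
  · intro h
    obtain ⟨w, hw, m, hm, hsum⟩ := Submodule.mem_sup.1 h
    have hm1 : πT m ∈ W₂ := (Submodule.mem_inf.1 hm).1
    have hm2 : πQ m = 0 := (Submodule.mem_inf.1 hm).2
    have eT : πT w + πT m = (0 : TT F S) := by rw [← map_add, hsum]; rfl
    have eQ : πQ w + πQ m = z := by rw [← map_add, hsum]; rfl
    refine ⟨w, ⟨hw, ?_⟩, ?_⟩
    · have : πT w = -πT m := eq_neg_of_add_eq_zero_left eT
      show πT w ∈ W₂
      rw [this]
      exact W₂.neg_mem hm1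
    · rw [hm2, add_zero] at eQ
      exact eQ
  · rintro ⟨w, ⟨hw1, hw2⟩, rfl⟩
    apply Submodule.mem_sup.2
    refine ⟨w, hw1, ιQ (πQ w) - w, Submodule.mem_inf.2 ⟨Submodule.mem_comap.2 ?_,
      LinearMap.mem_ker.2 ?_⟩, by abel⟩
    · have hT : πT (ιQ (S := S) (πQ w) - w) = -πT w := by
        rw [map_sub]
        show (0 : TT F S) - πT w = -πT w
        abel
      rw [hT]
      exact W₂.neg_mem hw2
    · rw [map_sub]
      show πQ w - πQ w = 0
      abel

theorem keyOrth (V₁ : Submodule F (MM F S P)) (V₂ : Submodule F (TT F S)) :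
    βQ.orthogonal (Submodule.map πQ (V₁ ⊓ Submodule.comap πT V₂))
      = Submodule.map πQ (βM.orthogonal V₁ ⊓ Submodule.comap πT (βT.orthogonal V₂)) := by
  rw [lemmaA, orth_inf βM_nondeg βM_refl, lemmaB, ← lemmaC]


lemma diracFun_coe {X : Type*} [Fintype X] (V : Submodule F ((X → F) × (X → F))) :
    diracFun (V : Set _) = (((pairForm (dotL (F := F) (X := X))).orthogonal V : Submodule F ((X → F) × (X → F))) : Set ((X → F) × (X → F))) := by
  ext z
  exact Iff.rfl

lemma diracFun_coeT (V : Submodule F (TT F S)) :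
    diracFun (V : Set _) = (((βT (F := F) (S := S)).orthogonal V :) : Set (TT F S)) :=
  diracFun_coe V

lemma diracFun_coeQ (V : Submodule F (QQ F P)) :
    diracFun (V : Set _) = (((βQ (F := F) (P := P)).orthogonal V :) : Set (QQ F P)) :=
  diracFun_coe V

lemma diracM_coe (V : Submodule F (MM F S P)) :
    diracM (V : Set _) = (((βM (F := F) (S := S) (P := P)).orthogonal V :) : Set (MM F S P)) := by
  ext z
  exact Iff.rfl

lemma portComp_coe (V₁ : Submodule F (MM F S P)) (V₂ : Submodule F (TT F S)) :
    portComp (V₁ : Set (MM F S P)) (V₂ : Set (TT F S))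
      = ((Submodule.map πQ (V₁ ⊓ Submodule.comap πT V₂) :) : Set (QQ F P)) := by
  ext z
  simp only [portComp, Set.mem_setOf_eq, SetLike.mem_coe, Submodule.mem_map,
    Submodule.mem_inf, Submodule.mem_comap]
  constructor
  · rintro ⟨f₁, f₂, h1, h2⟩
    exact ⟨((f₁, z.1), (f₂, z.2)), ⟨h1, h2⟩, rfl⟩
  · rintro ⟨x, ⟨h1, h2⟩, rfl⟩
    exact ⟨x.1.1, x.2.1, h1, h2⟩

end Concrete

end StmtAux

open StmtAux in
theorem aux_main {F S P : Type*} [Field F] [Fintype S] [Fintype P]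
    (V₁ W₁ : Submodule F (((S → F) × (P → F)) × ((S → F) × (P → F))))
    (V₂ W₂ : Submodule F ((S → F) × (S → F)))
    (hW₁ : (W₁ : Set (((S → F) × (P → F)) × ((S → F) × (P → F))))
        = diracM (V₁ : Set (((S → F) × (P → F)) × ((S → F) × (P → F)))))
    (hW₂ : (W₂ : Set ((S → F) × (S → F))) = diracFun (V₂ : Set ((S → F) × (S → F)))) :
    portComp (W₁ : Set (((S → F) × (P → F)) × ((S → F) × (P → F))))
        (W₂ : Set ((S → F) × (S → F)))
      = diracFun (portComp (V₁ : Set (((S → F) × (P → F)) × ((S → F) × (P → F))))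
          (V₂ : Set ((S → F) × (S → F)))) := by
  have eW₁ : W₁ = βM.orthogonal V₁ := SetLike.coe_injective (by rw [hW₁, diracM_coe])
  have eW₂ : W₂ = βT.orthogonal V₂ := SetLike.coe_injective (by rw [hW₂, diracFun_coeT])
  rw [portComp_coe V₁ V₂, diracFun_coeQ, keyOrth, portComp_coe W₁ W₂, eW₁, eW₂]

/-- Dirac duals compose: if `V₁,V̂₁` are Dirac duals of each other and so are
`V₂,V̂₂`, then `V₁ ↔ V₂` and `V̂₁ ↔ V̂₂` are Dirac duals of each other; in
particular matched composition preserves the Dirac (self-Dirac-dual) property. -/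
theorem stmt10 (F S P : Type*) [Field F] [Fintype S] [Fintype P] :
    (∀ (V₁ W₁ : Submodule F (((S → F) × (P → F)) × ((S → F) × (P → F))))
       (V₂ W₂ : Submodule F ((S → F) × (S → F))),
      ((W₁ : Set (((S → F) × (P → F)) × ((S → F) × (P → F))))
          = diracM (V₁ : Set (((S → F) × (P → F)) × ((S → F) × (P → F))))
        ∧ (V₁ : Set (((S → F) × (P → F)) × ((S → F) × (P → F))))
          = diracM (W₁ : Set (((S → F) × (P → F)) × ((S → F) × (P → F))))) →
      ((W₂ : Set ((S → F) × (S → F))) = diracFun (V₂ : Set ((S → F) × (S → F)))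
        ∧ (V₂ : Set ((S → F) × (S → F))) = diracFun (W₂ : Set ((S → F) × (S → F)))) →
      (portComp (W₁ : Set (((S → F) × (P → F)) × ((S → F) × (P → F))))
            (W₂ : Set ((S → F) × (S → F)))
          = diracFun (portComp (V₁ : Set (((S → F) × (P → F)) × ((S → F) × (P → F))))
              (V₂ : Set ((S → F) × (S → F))))
        ∧ portComp (V₁ : Set (((S → F) × (P → F)) × ((S → F) × (P → F))))
            (V₂ : Set ((S → F) × (S → F)))
          = diracFun (portComp (W₁ : Set (((S → F) × (P → F)) × ((S → F) × (P → F))))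
              (W₂ : Set ((S → F) × (S → F))))))
    ∧ (∀ (V₁ : Submodule F (((S → F) × (P → F)) × ((S → F) × (P → F))))
         (V₂ : Submodule F ((S → F) × (S → F))),
      diracM (V₁ : Set (((S → F) × (P → F)) × ((S → F) × (P → F))))
          = (V₁ : Set (((S → F) × (P → F)) × ((S → F) × (P → F)))) →
      diracFun (V₂ : Set ((S → F) × (S → F))) = (V₂ : Set ((S → F) × (S → F))) →
      diracFun (portComp (V₁ : Set (((S → F) × (P → F)) × ((S → F) × (P → F))))
            (V₂ : Set ((S → F) × (S → F))))
        = portComp (V₁ : Set (((S → F) × (P → F)) × ((S → F) × (P → F))))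
            (V₂ : Set ((S → F) × (S → F)))) := by
  constructor
  · rintro V₁ W₁ V₂ W₂ ⟨hW₁, hV₁⟩ ⟨hW₂, hV₂⟩
    exact ⟨aux_main V₁ W₁ V₂ W₂ hW₁ hW₂, aux_main W₁ V₁ W₂ V₂ hV₁ hV₂⟩
  · intro V₁ V₂ h1 h2
    exact (aux_main V₁ V₁ V₂ V₂ h1.symm h2.symm).symm
end
end
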